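/- Assume additionally ℓ_n ≥ 2 for all n (so in particular L = ∞). Then Σ_{n=0}^∞ ( ∫_{(n,n+2)} μ(x) dx · ∫_{(n,n+2)} μ(x)⁻¹ dx − 4 ) ≤ 4 Σ_{n=0}^∞ (s_{n+2} − s_n)²/(s_n s_{n+2}), an inequality in [0,∞]. In particular, if Σ_{n=0}^∞ (s_{n+2}/s_n − 1)² < ∞, then the left-hand side is finite. -/

import Mathlib

open MeasureTheory
open scoped ENNReal

private lemma bd_key_ineq (a b α β : ℝ) (ha : 0 < a) (hb : 0 < b) (hα : 0 < α)
    (hβ : 0 < β) (hαβ : α + β = 2) :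
    (a*α + b*β) * (a⁻¹*α + b⁻¹*β) ≤ 4 + (a-b)^2/(a*b) := by
  have hab : (0:ℝ) < a*b := mul_pos ha hb
  have hβ2 : β = 2 - α := by linarith
  subst hβ2
  have h1 : a⁻¹ * a = 1 := inv_mul_cancel₀ ha.ne'
  have h2 : b⁻¹ * b = 1 := inv_mul_cancel₀ hb.ne'
  have e0 : a⁻¹*α + b⁻¹*(2-α) = (b*α + a*(2-α))/(a*b) := by
    rw [eq_div_iff hab.ne']
    linear_combination (α*b)*h1 + ((2-α)*a)*h2
  have e2 : 4 + (a-b)^2/(a*b) = (4*(a*b) + (a-b)^2)/(a*b) := by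
    rw [add_div, mul_div_assoc, div_self hab.ne']; ring
  rw [e0, e2, mul_div_assoc', div_le_div_iff_of_pos_right hab]
  nlinarith [sq_nonneg ((a-b)*(α-1))]

set_option maxHeartbeats 1000000 in
theorem bessonov_denisov_sum_estimate (s : ℕ → ℕ) (hs : ∀ n, 1 ≤ s n)
    (ℓ : ℕ → ℝ) (hℓ : ∀ n, 0 < ℓ n) (hℓ2 : ∀ n, 2 ≤ ℓ n)
    (t : ℕ → ℝ) (ht0 : t 0 = 0) (htrec : ∀ n, t (n + 1) = t n + ℓ n)
    (L : ℝ≥0∞) (hL : L = ∑' n : ℕ, ENNReal.ofReal (ℓ n))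
    (μ : ℝ → ℝ)
    (hμ : ∀ n : ℕ, ∀ x ∈ Set.Ico (t n) (t (n + 1)), μ x = (s n : ℝ) * (s (n + 1) : ℝ))
    (hμout : ∀ x : ℝ, (x < 0 ∨ L ≤ ENNReal.ofReal x) → μ x = 1) :
    (∑' n : ℕ,
      ((∫⁻ x in Set.Ioo (n : ℝ) (n + 2), ENNReal.ofReal (μ x)) *
          (∫⁻ x in Set.Ioo (n : ℝ) (n + 2), ENNReal.ofReal ((μ x)⁻¹)) - 4)) ≤
      4 * ∑' n : ℕ,
        ENNReal.ofReal (((s (n + 2) : ℝ) - (s n : ℝ)) ^ 2 / ((s n : ℝ) * (s (n + 2) : ℝ))) ∧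
    (Summable (fun n : ℕ => ((s (n + 2) : ℝ) / (s n : ℝ) - 1) ^ 2) →
      (∑' n : ℕ,
        ((∫⁻ x in Set.Ioo (n : ℝ) (n + 2), ENNReal.ofReal (μ x)) *
            (∫⁻ x in Set.Ioo (n : ℝ) (n + 2), ENNReal.ofReal ((μ x)⁻¹)) - 4)) < ∞) := by
  classical
  set g : ℕ → ℝ :=
    fun k => ((s (k + 2) : ℝ) - (s k : ℝ)) ^ 2 / ((s k : ℝ) * (s (k + 2) : ℝ)) with hgdef
  have hsp : ∀ m, (0:ℝ) < s m := fun m => by exact_mod_cast (hs m)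
  have hgnonneg : ∀ k, 0 ≤ g k := fun k => by
    have := hsp k; have := hsp (k+2); positivity
  have htge : ∀ j : ℕ, (2*j : ℝ) ≤ t j := by
    intro j
    induction j with
    | zero => simp [ht0]
    | succ j ih => rw [htrec]; push_cast at ih ⊢; linarith [hℓ2 j]
  have hex : ∀ n : ℕ, ∃ k, t k ≤ (n:ℝ) ∧ (n:ℝ) < t (k+1) := by
    intro n
    have key : ∀ m : ℕ, (n:ℝ) < t m → ∃ k, t k ≤ (n:ℝ) ∧ (n:ℝ) < t (k+1) := by
      intro m
      induction m with
      | zero =>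
        intro h; rw [ht0] at h
        exact absurd h (not_lt.mpr (Nat.cast_nonneg n))
      | succ m ih =>
        intro h
        by_cases hm : t m ≤ (n:ℝ)
        · exact ⟨m, hm, h⟩
        · exact ih (not_le.mp hm)
    refine key (n+1) ?_
    have := htge (n+1)
    push_cast at this ⊢
    linarith
  choose K hK1 hK2 using hex
  set e : ℕ → ℕ → ℝ≥0∞ := fun k n =>
    if K n = k ∧ t (k+1) < (n:ℝ) + 2 then ENNReal.ofReal (g k) else 0 with hedef
  -- the per-n estimate
  have hterm : ∀ n : ℕ,
      (∫⁻ x in Set.Ioo (n : ℝ) (n + 2), ENNReal.ofReal (μ x)) *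
          (∫⁻ x in Set.Ioo (n : ℝ) (n + 2), ENNReal.ofReal ((μ x)⁻¹)) - 4
        ≤ e (K n) n := by
    intro n
    set k := K n with hk
    have hk1 : t k ≤ (n:ℝ) := hK1 n
    have hk2 : (n:ℝ) < t (k+1) := hK2 n
    set a : ℝ := (s k : ℝ) * (s (k+1) : ℝ) with hadef
    set b : ℝ := (s (k+1) : ℝ) * (s (k+2) : ℝ) with hbdef
    have ha : 0 < a := mul_pos (hsp k) (hsp (k+1))
    have hb : 0 < b := mul_pos (hsp (k+1)) (hsp (k+2))
    by_cases hc : t (k+1) < (n:ℝ) + 2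
    · -- two steps inside the interval
      set c := t (k+1) with hcdef
      have hnc : (n:ℝ) < c := hk2
      have hsplit : Set.Ioo (n:ℝ) c ∪ Set.Ico c ((n:ℝ)+2) = Set.Ioo (n:ℝ) ((n:ℝ)+2) :=
        Set.Ioo_union_Ico_eq_Ioo hnc hc.le
      have hdisj : Disjoint (Set.Ioo (n:ℝ) c) (Set.Ico c ((n:ℝ)+2)) :=
        Set.disjoint_left.mpr (fun x hx hx2 => absurd hx.2 (not_lt.mpr hx2.1))
      have hn2 : (n:ℝ) + 2 ≤ t (k+2) := by
        rw [htrec]; linarith [hℓ2 (k+1)]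
      set α : ℝ := c - n with hαdef
      set β : ℝ := (n:ℝ) + 2 - c with hβdef
      have hα : 0 < α := by simp only [hαdef]; linarith
      have hβ : 0 < β := by simp only [hβdef]; linarith
      have hαβ : α + β = 2 := by simp only [hαdef, hβdef]; ring
      have hmem1 : ∀ x ∈ Set.Ioo (n:ℝ) c, x ∈ Set.Ico (t k) (t (k+1)) :=
        fun x hx => ⟨hk1.trans hx.1.le, hx.2⟩
      have hmem2 : ∀ x ∈ Set.Ico c ((n:ℝ)+2), x ∈ Set.Ico (t (k+1)) (t (k+2)) :=
        fun x hx => ⟨hx.1, lt_of_lt_of_le hx.2 hn2⟩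
      have hvol1 : volume (Set.Ioo (n:ℝ) c) = ENNReal.ofReal α := by
        rw [Real.volume_Ioo]
      have hvol2 : volume (Set.Ico c ((n:ℝ)+2)) = ENNReal.ofReal β := by
        rw [Real.volume_Ico]
      have hI1 : (∫⁻ x in Set.Ioo (n : ℝ) (n + 2), ENNReal.ofReal (μ x))
          = ENNReal.ofReal (a*α + b*β) := by
        rw [← hsplit, lintegral_union measurableSet_Ico hdisj]
        have e1 : (∫⁻ x in Set.Ioo (n:ℝ) c, ENNReal.ofReal (μ x))
            = ENNReal.ofReal a * volume (Set.Ioo (n:ℝ) c) := by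
          rw [setLIntegral_congr_fun measurableSet_Ioo
            (fun x hx => by rw [hμ k x (hmem1 x hx)]), setLIntegral_const]
        have e2 : (∫⁻ x in Set.Ico c ((n:ℝ)+2), ENNReal.ofReal (μ x))
            = ENNReal.ofReal b * volume (Set.Ico c ((n:ℝ)+2)) := by
          rw [setLIntegral_congr_fun measurableSet_Ico
            (fun x hx => by rw [hμ (k+1) x (hmem2 x hx)]), setLIntegral_const]
        rw [e1, e2, hvol1, hvol2, ← ENNReal.ofReal_mul ha.le, ← ENNReal.ofReal_mul hb.le,
          ← ENNReal.ofReal_add (by positivity) (by positivity)]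
      have hI2 : (∫⁻ x in Set.Ioo (n : ℝ) (n + 2), ENNReal.ofReal ((μ x)⁻¹))
          = ENNReal.ofReal (a⁻¹*α + b⁻¹*β) := by
        rw [← hsplit, lintegral_union measurableSet_Ico hdisj]
        have e1 : (∫⁻ x in Set.Ioo (n:ℝ) c, ENNReal.ofReal ((μ x)⁻¹))
            = ENNReal.ofReal a⁻¹ * volume (Set.Ioo (n:ℝ) c) := by
          rw [setLIntegral_congr_fun measurableSet_Ioo
            (fun x hx => by rw [hμ k x (hmem1 x hx)]), setLIntegral_const]
        have e2 : (∫⁻ x in Set.Ico c ((n:ℝ)+2), ENNReal.ofReal ((μ x)⁻¹))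
            = ENNReal.ofReal b⁻¹ * volume (Set.Ico c ((n:ℝ)+2)) := by
          rw [setLIntegral_congr_fun measurableSet_Ico
            (fun x hx => by rw [hμ (k+1) x (hmem2 x hx)]), setLIntegral_const]
        rw [e1, e2, hvol1, hvol2, ← ENNReal.ofReal_mul (inv_pos.mpr ha).le,
          ← ENNReal.ofReal_mul (inv_pos.mpr hb).le,
          ← ENNReal.ofReal_add (by positivity) (by positivity)]
      have hgk : (a-b)^2/(a*b) = g k := by
        have h1 : a*b ≠ 0 := (mul_pos ha hb).ne'
        have h2 : ((s k : ℝ) * (s (k+2) : ℝ)) ≠ 0 := (mul_pos (hsp k) (hsp (k+2))).ne'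
        simp only [hgdef]
        rw [div_eq_div_iff h1 h2, hadef, hbdef]
        ring
      have hkey : (a*α + b*β) * (a⁻¹*α + b⁻¹*β) ≤ 4 + g k := by
        rw [← hgk]; exact bd_key_ineq a b α β ha hb hα hβ hαβ
      have hE : e k n = ENNReal.ofReal (g k) := by
        simp only [hedef]; rw [if_pos ⟨hk.symm, hc⟩]
      rw [hI1, hI2, ← ENNReal.ofReal_mul (add_nonneg (mul_nonneg ha.le hα.le) (mul_nonneg hb.le hβ.le)), hE]
      calc ENNReal.ofReal ((a*α + b*β) * (a⁻¹*α + b⁻¹*β)) - 4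
          ≤ ENNReal.ofReal (4 + g k) - 4 :=
            tsub_le_tsub_right (ENNReal.ofReal_le_ofReal hkey) 4
        _ = (4 + ENNReal.ofReal (g k)) - 4 := by
            rw [ENNReal.ofReal_add (by norm_num) (hgnonneg k), ENNReal.ofReal_ofNat]
        _ = ENNReal.ofReal (g k) := by
            rw [ENNReal.add_sub_cancel_left (by norm_num)]
    · -- single step covers the interval
      have hsub : ∀ x ∈ Set.Ioo (n:ℝ) ((n:ℝ)+2), x ∈ Set.Ico (t k) (t (k+1)) :=
        fun x hx => ⟨hk1.trans hx.1.le, lt_of_lt_of_le hx.2 (not_lt.mp hc)⟩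
      have hvol : volume (Set.Ioo (n:ℝ) ((n:ℝ)+2)) = ENNReal.ofReal 2 := by
        rw [Real.volume_Ioo]; norm_num
      have hI1 : (∫⁻ x in Set.Ioo (n : ℝ) (n + 2), ENNReal.ofReal (μ x))
          = ENNReal.ofReal a * ENNReal.ofReal 2 := by
        rw [setLIntegral_congr_fun measurableSet_Ioo
          (fun x hx => by rw [hμ k x (hsub x hx)]), setLIntegral_const, hvol]
      have hI2 : (∫⁻ x in Set.Ioo (n : ℝ) (n + 2), ENNReal.ofReal ((μ x)⁻¹))
          = ENNReal.ofReal a⁻¹ * ENNReal.ofReal 2 := by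
        rw [setLIntegral_congr_fun measurableSet_Ioo
          (fun x hx => by rw [hμ k x (hsub x hx)]), setLIntegral_const, hvol]
      have : (ENNReal.ofReal a * ENNReal.ofReal 2) * (ENNReal.ofReal a⁻¹ * ENNReal.ofReal 2)
          = 4 := by
        rw [← ENNReal.ofReal_mul ha.le, ← ENNReal.ofReal_mul (by positivity),
          ← ENNReal.ofReal_mul (by positivity)]
        rw [show a * 2 * (a⁻¹ * 2) = (a * a⁻¹) * 4 by ring, mul_inv_cancel₀ ha.ne', one_mul]
        norm_num
      rw [hI1, hI2, this, tsub_self]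
      exact zero_le
  -- counting: each column sums to at most twice the bound
  have hinner : ∀ k : ℕ, (∑' n : ℕ, e k n) ≤ 2 * ENNReal.ofReal (g k) := by
    intro k
    set M := ⌈t (k+1)⌉₊ with hM
    set m := M - 2 with hm
    have hle : ∀ n : ℕ, e k n ≤
        (if n = m then ENNReal.ofReal (g k) else 0)
          + (if n = m+1 then ENNReal.ofReal (g k) else 0) := by
      intro n
      by_cases hcond : K n = k ∧ t (k+1) < (n:ℝ) + 2
      · have h1 : (n:ℝ) < t (k+1) := hcond.1 ▸ hK2 n
        have hM1 : n < M := Nat.lt_ceil.mpr h1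
        have hM2 : M ≤ n + 2 := Nat.ceil_le.mpr (by push_cast; linarith [hcond.2])
        have hM3 : 2 ≤ M := by
          have h2t : (1:ℝ) < t (k+1) := by
            have := htge (k+1); push_cast at this; linarith
          exact Nat.lt_ceil.mpr (by exact_mod_cast h2t)
        have hnm : n = m ∨ n = m + 1 := by omega
        have hE : e k n = ENNReal.ofReal (g k) := by
          simp only [hedef]; rw [if_pos hcond]
        rcases hnm with h | h
        · rw [hE, if_pos h]; exact le_add_right le_rfl
        · rw [hE, if_pos h]; exact le_add_left le_rfl
      · have hE : e k n = 0 := by simp only [hedef]; rw [if_neg hcond]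
        rw [hE]; exact zero_le
    calc (∑' n : ℕ, e k n)
        ≤ ∑' n : ℕ, ((if n = m then ENNReal.ofReal (g k) else 0)
            + (if n = m+1 then ENNReal.ofReal (g k) else 0)) := ENNReal.tsum_le_tsum hle
      _ = (∑' n : ℕ, if n = m then ENNReal.ofReal (g k) else 0)
            + (∑' n : ℕ, if n = m+1 then ENNReal.ofReal (g k) else 0) := ENNReal.tsum_add
      _ = ENNReal.ofReal (g k) + ENNReal.ofReal (g k) := by rw [tsum_ite_eq, tsum_ite_eq]
      _ = 2 * ENNReal.ofReal (g k) := (two_mul _).symm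
  have main : (∑' n : ℕ,
      ((∫⁻ x in Set.Ioo (n : ℝ) (n + 2), ENNReal.ofReal (μ x)) *
          (∫⁻ x in Set.Ioo (n : ℝ) (n + 2), ENNReal.ofReal ((μ x)⁻¹)) - 4))
      ≤ 2 * ∑' k : ℕ, ENNReal.ofReal (g k) := by
    calc (∑' n : ℕ,
        ((∫⁻ x in Set.Ioo (n : ℝ) (n + 2), ENNReal.ofReal (μ x)) *
            (∫⁻ x in Set.Ioo (n : ℝ) (n + 2), ENNReal.ofReal ((μ x)⁻¹)) - 4))
        ≤ ∑' n : ℕ, ∑' k : ℕ, e k n :=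
          ENNReal.tsum_le_tsum (fun n => (hterm n).trans (ENNReal.le_tsum (K n)))
      _ = ∑' k : ℕ, ∑' n : ℕ, e k n := ENNReal.tsum_comm
      _ ≤ ∑' k : ℕ, 2 * ENNReal.ofReal (g k) := ENNReal.tsum_le_tsum hinner
      _ = 2 * ∑' k : ℕ, ENNReal.ofReal (g k) := ENNReal.tsum_mul_left
  have main4 : (∑' n : ℕ,
      ((∫⁻ x in Set.Ioo (n : ℝ) (n + 2), ENNReal.ofReal (μ x)) *
          (∫⁻ x in Set.Ioo (n : ℝ) (n + 2), ENNReal.ofReal ((μ x)⁻¹)) - 4))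
      ≤ 4 * ∑' k : ℕ, ENNReal.ofReal (g k) :=
    main.trans (by gcongr; norm_num)
  refine ⟨main4, fun hsumm => lt_of_le_of_lt main4 ?_⟩
  -- finiteness
  have hS : (∑' k : ℕ, ENNReal.ofReal (g k)) < ∞ := by
    obtain ⟨N, hN⟩ : ∃ N : ℕ, ∀ n ≥ N, ((s (n + 2) : ℝ) / (s n : ℝ) - 1) ^ 2 < 1/4 :=
      Filter.eventually_atTop.mp
        (hsumm.tendsto_atTop_zero.eventually_lt_const (by norm_num : (0:ℝ) < 1/4))
    have hcomp : ∀ n, N ≤ n → g n ≤ 2 * ((s (n + 2) : ℝ) / (s n : ℝ) - 1) ^ 2 := by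
      intro n hn
      have hv : (0:ℝ) < s n := hsp n
      have hu : (0:ℝ) < s (n+2) := hsp (n+2)
      have hlt := hN n hn
      have hw : (1:ℝ)/2 < (s (n + 2) : ℝ) / (s n : ℝ) := by nlinarith [hlt]
      have hvu : (s n : ℝ) ≤ 2 * (s (n+2) : ℝ) := by
        have := (lt_div_iff₀ hv).mp hw; linarith
      have hh : ((s (n + 2) : ℝ) / (s n : ℝ) - 1) ^ 2
          = ((s (n+2) : ℝ) - (s n : ℝ))^2 / ((s n : ℝ))^2 := by
        rw [div_sub_one hv.ne', div_pow]
      simp only [hgdef]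
      rw [hh, ← mul_div_assoc,
        div_le_div_iff₀ (by positivity) (by positivity)]
      nlinarith [mul_nonneg (mul_nonneg (sq_nonneg ((s (n+2) : ℝ) - (s n : ℝ))) hv.le)
        (by linarith : (0:ℝ) ≤ 2 * (s (n+2) : ℝ) - (s n : ℝ))]
    have htail : Summable (fun k : ℕ => g (k + N)) := by
      refine Summable.of_nonneg_of_le (fun k => hgnonneg _)
        (fun k => hcomp (k + N) (Nat.le_add_left N k)) ?_
      exact ((summable_nat_add_iff N).mpr hsumm).mul_left 2
    have hgs : Summable g := (summable_nat_add_iff N).mp htail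
    calc (∑' k : ℕ, ENNReal.ofReal (g k))
        = ENNReal.ofReal (∑' k : ℕ, g k) :=
          (ENNReal.ofReal_tsum_of_nonneg hgnonneg hgs).symm
      _ < ∞ := ENNReal.ofReal_lt_top
  exact ENNReal.mul_lt_top (by norm_num) hS
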